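/- (Harper's edge-isoperimetric consequence) For every subset S of the vertex set of the d-dimensional hypercube Q with |S| ≤ 2^(d-1), the number of edges of Q with exactly one endpoint in S is at least |S|. -/

import Mathlib

open Finset

/-- The `d`-dimensional hypercube graph on `{0,1}^d`: two vertices are adjacent
iff they differ in exactly one coordinate. -/
def hypercube (d : ℕ) : SimpleGraph (Fin d → Bool) where
  Adj x y := (Finset.univ.filter fun i => x i ≠ y i).card = 1
  symm := ⟨by
    intro x y h
    simpa [ne_comm] using h⟩
  loopless := ⟨by intro x h; simp at h⟩

instance {d : ℕ} : DecidableRel (hypercube d).Adj := fun x y =>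
  decEq _ _

namespace HarperAux

variable {d : ℕ}

/-- The `k`-th vertex on the canonical path from `x` to `y` (flip bits left to right). -/
def mid (x y : Fin d → Bool) (k : ℕ) : Fin d → Bool :=
  fun j => if (j : ℕ) < k then y j else x j

lemma mid_zero (x y : Fin d → Bool) : mid x y 0 = x := by
  funext j; simp [mid]

lemma mid_d (x y : Fin d → Bool) : mid x y d = y := by
  funext j; simp [mid, j.isLt]

lemma mid_eq_of_ne (x y : Fin d → Bool) (k : ℕ) (j : Fin d) (h : (j : ℕ) ≠ k) :
    mid x y k j = mid x y (k + 1) j := by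
  unfold mid
  rcases lt_or_gt_of_ne h with h' | h'
  · simp [h', Nat.lt_succ_of_lt h']
  · have h1 : ¬ (j : ℕ) < k := by omega
    have h2 : ¬ (j : ℕ) < k + 1 := by omega
    simp [h1, h2]

lemma mid_apply_self (x y : Fin d → Bool) (k : ℕ) (hk : k < d) :
    mid x y k ⟨k, hk⟩ = x ⟨k, hk⟩ ∧ mid x y (k + 1) ⟨k, hk⟩ = y ⟨k, hk⟩ := by
  constructor <;> simp [mid]

/-- If consecutive path vertices are distinct, they differ exactly at coordinate `k`. -/
lemma diff_filter {x y : Fin d → Bool} {k : ℕ} (hk : k < d)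
    (hne : mid x y k ≠ mid x y (k + 1)) :
    (Finset.univ.filter fun i => mid x y k i ≠ mid x y (k + 1) i) = {(⟨k, hk⟩ : Fin d)} := by
  ext i
  simp only [mem_filter, mem_univ, true_and, mem_singleton]
  constructor
  · intro hi
    by_contra hik
    exact hi (mid_eq_of_ne x y k i (by simpa [Fin.ext_iff] using hik))
  · rintro rfl
    intro hcontra
    apply hne
    funext j
    by_cases hj : (j : ℕ) = k
    · have : j = (⟨k, hk⟩ : Fin d) := Fin.ext hj
      rw [this]; exact hcontra
    · exact mid_eq_of_ne x y k j hj

open Classical in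
/-- First boundary edge on the canonical path from `p.1` to `p.2`. -/
noncomputable def firstEdge (S : Finset (Fin d → Bool)) (p : (Fin d → Bool) × (Fin d → Bool)) :
    (Fin d → Bool) × (Fin d → Bool) :=
  if h : ∃ m, mid p.1 p.2 m ∉ S then
    (mid p.1 p.2 (Nat.find h - 1), mid p.1 p.2 (Nat.find h))
  else p

lemma firstEdge_spec (S : Finset (Fin d → Bool)) {x y : Fin d → Bool}
    (hx : x ∈ S) (hy : y ∉ S) :
    ∃ k, k < d ∧ firstEdge S (x, y) = (mid x y k, mid x y (k + 1)) ∧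
      mid x y k ∈ S ∧ mid x y (k + 1) ∉ S := by
  have hex : ∃ m, mid x y m ∉ S := ⟨d, by rwa [mid_d]⟩
  have hfind_le : Nat.find hex ≤ d := Nat.find_le (by rwa [mid_d])
  have hfind_pos : 1 ≤ Nat.find hex := by
    rcases Nat.eq_zero_or_pos (Nat.find hex) with h0 | h1
    · exfalso
      have := Nat.find_spec hex
      rw [h0, mid_zero] at this
      exact this hx
    · exact h1
  refine ⟨Nat.find hex - 1, by omega, ?_, ?_, ?_⟩
  · simp only [firstEdge, dif_pos hex]
    have : Nat.find hex - 1 + 1 = Nat.find hex := by omega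
    rw [this]
  · have := Nat.find_min hex (m := Nat.find hex - 1) (by omega)
    simpa using this
  · have : Nat.find hex - 1 + 1 = Nat.find hex := by omega
    rw [this]
    exact Nat.find_spec hex

/-- Half of the cube has `2^(d-1)` vertices. -/
lemma card_half (i : Fin d) (b : Bool) :
    (Finset.univ.filter fun h : Fin d → Bool => h i = b).card = 2 ^ (d - 1) := by
  have hbij : ∀ c : Bool,
      (Finset.univ.filter fun h : Fin d → Bool => h i = c).card =
      (Finset.univ.filter fun h : Fin d → Bool => h i = !c).card := by
    intro c
    apply Finset.card_bij (fun h _ => Function.update h i (!c))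
    · intro h hh
      simp [Function.update_self]
    · intro h1 h1m h2 h2m heq
      simp only [mem_filter, mem_univ, true_and] at h1m h2m
      funext j
      by_cases hj : j = i
      · rw [hj, h1m, h2m]
      · have := congrFun heq j
        rwa [Function.update_of_ne hj, Function.update_of_ne hj] at this
    · intro h hh
      simp only [mem_filter, mem_univ, true_and] at hh
      refine ⟨Function.update h i c, by simp [Function.update_self], ?_⟩
      funext j
      by_cases hj : j = i
      · subst hj; simp [Function.update_self, hh]
      · simp [Function.update_of_ne hj]
  have hfeq : (Finset.univ.filter fun h : Fin d → Bool => h i = b)ᶜ =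
      (Finset.univ.filter fun h : Fin d → Bool => h i = !b) := by
    ext h
    simp only [Finset.mem_compl, mem_filter, mem_univ, true_and]
    cases b <;> simp
  have hsplit :
      (Finset.univ.filter fun h : Fin d → Bool => h i = b).card +
      (Finset.univ.filter fun h : Fin d → Bool => h i = !b).card = 2 ^ d := by
    rw [← hfeq, Finset.card_add_card_compl]
    simp [Fintype.card_fun]
  have hd : 1 ≤ d := i.pos
  have h2 : 2 ^ d = 2 ^ (d - 1) + 2 ^ (d - 1) := by
    have h' : 2 ^ (d - 1 + 1) = 2 ^ (d - 1) * 2 := pow_succ 2 (d - 1)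
    rw [Nat.sub_add_cancel hd] at h'
    rw [h', mul_two]
  have hb := hbij b
  have h3 : 2 * (Finset.univ.filter fun h : Fin d → Bool => h i = b).card =
      2 * 2 ^ (d - 1) := by
    rw [two_mul, two_mul, ← h2]
    nth_rewrite 2 [hb]
    exact hsplit
  exact Nat.eq_of_mul_eq_mul_left two_pos h3

end HarperAux

open HarperAux in
/-- Weak form of Harper's edge-isoperimetric inequality: any subset `S` of the
`d`-dimensional hypercube with `|S| ≤ 2^(d-1)` has edge boundary of size at
least `|S|`. -/
theorem harper_edge_boundary {d : ℕ} (S : Finset (Fin d → Bool))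
    (hS : 2 * S.card ≤ 2 ^ d) :
    S.card ≤ (Finset.univ.filter fun e : (Fin d → Bool) × (Fin d → Bool) =>
      (hypercube d).Adj e.1 e.2 ∧ e.1 ∈ S ∧ e.2 ∉ S).card := by
  classical
  rcases Nat.eq_zero_or_pos d with rfl | hd
  · have : S.card = 0 := by simp at hS; omega
    simp [this]
  set B := (Finset.univ.filter fun e : (Fin d → Bool) × (Fin d → Bool) =>
      (hypercube d).Adj e.1 e.2 ∧ e.1 ∈ S ∧ e.2 ∉ S) with hB
  set P := S ×ˢ Sᶜ with hP
  -- fiber data: for each pair in P, the chosen crossing edge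
  have key : ∀ p ∈ P, ∃ k, k < d ∧ firstEdge S p = (mid p.1 p.2 k, mid p.1 p.2 (k + 1)) ∧
      mid p.1 p.2 k ∈ S ∧ mid p.1 p.2 (k + 1) ∉ S := by
    rintro ⟨x, y⟩ hp
    rw [hP, Finset.mem_product] at hp
    exact firstEdge_spec S hp.1 (by simpa using hp.2)
  -- firstEdge maps P into B
  have hmaps : ∀ p ∈ P, firstEdge S p ∈ B := by
    intro p hp
    obtain ⟨k, hk, hfe, h1, h2⟩ := key p hp
    have hne : mid p.1 p.2 k ≠ mid p.1 p.2 (k + 1) := fun h => h2 (h ▸ h1)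
    rw [hB, mem_filter]
    refine ⟨mem_univ _, ?_, ?_, ?_⟩
    · show (hypercube d).Adj (firstEdge S p).1 (firstEdge S p).2
      rw [hfe]
      show (Finset.univ.filter fun i => mid p.1 p.2 k i ≠ mid p.1 p.2 (k + 1) i).card = 1
      rw [diff_filter hk hne]
      simp
    · rw [hfe]; exact h1
    · rw [hfe]; exact h2
  -- fiber bound
  have hfiber : ∀ e ∈ B, (P.filter fun p => firstEdge S p = e).card ≤ 2 ^ (d - 1) := by
    intro e he
    rw [hB, mem_filter] at he
    obtain ⟨-, hadj, he1, he2⟩ := he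
    -- e differs in exactly one coordinate i
    obtain ⟨i, hi⟩ := Finset.card_eq_one.mp hadj
    -- For each p in the fiber, its crossing index equals i
    have hcross : ∀ p ∈ P.filter fun p => firstEdge S p = e,
        e.1 = mid p.1 p.2 (i : ℕ) ∧ e.2 = mid p.1 p.2 ((i : ℕ) + 1) := by
      intro p hp
      rw [mem_filter] at hp
      obtain ⟨hpP, hpe⟩ := hp
      obtain ⟨k, hk, hfe, h1, h2⟩ := key p hpP
      have hne : mid p.1 p.2 k ≠ mid p.1 p.2 (k + 1) := fun h => h2 (h ▸ h1)
      have hkd := diff_filter hk hne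
      have he12 : e.1 = mid p.1 p.2 k ∧ e.2 = mid p.1 p.2 (k + 1) := by
        rw [← hpe, hfe]; exact ⟨rfl, rfl⟩
      have hieq : (⟨k, hk⟩ : Fin d) = i := by
        have : (Finset.univ.filter fun j => e.1 j ≠ e.2 j) =
            (Finset.univ.filter fun j => mid p.1 p.2 k j ≠ mid p.1 p.2 (k + 1) j) := by
          rw [he12.1, he12.2]
        rw [this, hkd] at hi
        exact Finset.singleton_injective hi
      have hki : k = (i : ℕ) := by rw [← hieq]
      rw [he12.1, he12.2, hki]
      exact ⟨rfl, rfl⟩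
    -- injective map from fiber into the half-cube { h | h i = e.2 i }
    have hinj : (P.filter fun p => firstEdge S p = e).card ≤
        (Finset.univ.filter fun h : Fin d → Bool => h i = e.2 i).card := by
      apply Finset.card_le_card_of_injOn
        (fun p => fun j : Fin d => if (j : ℕ) < (i : ℕ) then p.1 j else p.2 j)
      · intro p hp
        obtain ⟨h1, h2⟩ := hcross p hp
        simp only [mem_filter, mem_univ, true_and]
        have : p.2 i = e.2 i := by
          rw [h2]; simp [mid]
        simp [this]
      · intro p hp q hq heq
        obtain ⟨hp1, hp2⟩ := hcross p hp
        obtain ⟨hq1, hq2⟩ := hcross q hq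
        have hx : p.1 = q.1 := by
          funext j
          by_cases hj : (j : ℕ) < (i : ℕ)
          · have := congrFun heq j
            simpa [hj] using this
          · have h1 : p.1 j = e.1 j := by rw [hp1]; simp [mid, hj]
            have h2 : q.1 j = e.1 j := by rw [hq1]; simp [mid, hj]
            rw [h1, h2]
        have hy : p.2 = q.2 := by
          funext j
          by_cases hj : (j : ℕ) < (i : ℕ)
          · have hlt : (j : ℕ) < (i : ℕ) + 1 := by omega
            have h1 : p.2 j = e.2 j := by rw [hp2]; simp [mid, hlt]
            have h2 : q.2 j = e.2 j := by rw [hq2]; simp [mid, hlt]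
            rw [h1, h2]
          · have := congrFun heq j
            simpa [hj] using this
        exact Prod.ext hx hy
    rw [card_half] at hinj
    exact hinj
  -- now count
  have hcount : P.card ≤ 2 ^ (d - 1) * B.card :=
    Finset.card_le_mul_card_image_of_maps_to hmaps _ hfiber
  have hPcard : P.card = S.card * (2 ^ d - S.card) := by
    rw [hP, Finset.card_product, Finset.card_compl]
    congr 1
    simp [Fintype.card_fun]
  have h2d : 2 ^ d = 2 ^ (d - 1) + 2 ^ (d - 1) := by
    have h' : 2 ^ (d - 1 + 1) = 2 ^ (d - 1) * 2 := pow_succ 2 (d - 1)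
    have hdd : d - 1 + 1 = d := by omega
    rw [hdd] at h'
    omega
  have hSle : S.card ≤ 2 ^ (d - 1) := by omega
  have hstep : S.card * 2 ^ (d - 1) ≤ 2 ^ (d - 1) * B.card := by
    calc S.card * 2 ^ (d - 1) ≤ S.card * (2 ^ d - S.card) :=
          Nat.mul_le_mul_left _ (by omega)
      _ = P.card := hPcard.symm
      _ ≤ 2 ^ (d - 1) * B.card := hcount
  have hpos : 0 < 2 ^ (d - 1) := Nat.pow_pos (by norm_num)
  rw [mul_comm (2 ^ (d - 1))] at hstep
  exact Nat.le_of_mul_le_mul_right hstep hpos
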